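/- For any nonzero complex numbers z₀ and z₁, knowledge of |z₀|², |z₁|², and the four quantities |⟨(z₁,z₀), α[k]⟩|² for k = 1,…,4 (with α[k] as in the phase-propagation setup) determines the phase difference arg(z₁) − arg(z₀) uniquely: specifically, the product z₁·conj(z₀) is uniquely determined by these measurements. -/

import Mathlib

open Complex

/-- The constant `a = √((1 − 1/√3)/2)`. -/
noncomputable def aConst : ℂ := (Real.sqrt ((1 - 1 / Real.sqrt 3) / 2) : ℝ)

/-- The constant `b = e^{i5π/4}·√((1 + 1/√3)/2)`. -/
noncomputable def bConst : ℂ :=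
  Complex.exp (Complex.I * (5 * Real.pi / 4)) * (Real.sqrt ((1 + 1 / Real.sqrt 3) / 2) : ℝ)

/-- The standard Hermitian inner product `⟨y, v⟩ = y₁ conj(v₁) + y₂ conj(v₂)` on `ℂ²`. -/
def inn2 (y v : Fin 2 → ℂ) : ℂ := y 0 * star (v 0) + y 1 * star (v 1)

/-- The four phase-propagation measurement vectors
`α[1] = (a,b)`, `α[2] = (b,a)`, `α[3] = (a,−b)`, `α[4] = (−b,a)` in `ℂ²`. -/
noncomputable def alphaVec : Fin 4 → Fin 2 → ℂ :=
  ![![aConst, bConst], ![bConst, aConst], ![aConst, -bConst], ![-bConst, aConst]]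

lemma expand_meas (x y A B : ℂ) :
    ‖x * star A + y * star B‖ ^ 2
      = ‖x‖ ^ 2 * ‖A‖ ^ 2 + ‖y‖ ^ 2 * ‖B‖ ^ 2
        + 2 * (x * star y * star A * B).re := by
  rw [Complex.sq_norm, Complex.normSq_add, Complex.normSq_mul, Complex.normSq_mul]
  have h1 : (starRingEnd ℂ) (y * star B) = star y * B := by
    simp [map_mul, Complex.star_def]
  have h2 : x * star A * ((starRingEnd ℂ) (y * star B)) = x * star y * star A * B := by
    rw [h1]; ring
  rw [h2]
  simp [Complex.sq_norm, Complex.normSq_conj, Complex.star_def]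

lemma sqrt3_gt_one : (1:ℝ) < Real.sqrt 3 := by
  nlinarith [Real.sq_sqrt (by norm_num : (3:ℝ) ≥ 0), Real.sqrt_nonneg 3]

lemma aRe_pos : (0:ℝ) < Real.sqrt ((1 - 1 / Real.sqrt 3) / 2) := by
  apply Real.sqrt_pos.2
  have h := sqrt3_gt_one
  have : 1 / Real.sqrt 3 < 1 := by
    rw [div_lt_one (by linarith)]; exact h
  linarith

lemma bRe_eq : bConst.re = -(Real.sqrt 2 / 2) * Real.sqrt ((1 + 1 / Real.sqrt 3) / 2) := by
  have hc : Real.cos (5 * Real.pi / 4) = -(Real.sqrt 2 / 2) := by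
    have h : (5 * Real.pi / 4) = Real.pi + Real.pi / 4 := by ring
    rw [h]; simp [Real.cos_add, Real.cos_pi_div_four]
  have h1 : (Complex.I * (5 * Real.pi / 4) : ℂ) = ((5 * Real.pi / 4 : ℝ) : ℂ) * Complex.I := by
    push_cast; ring
  unfold bConst
  rw [h1]
  simp only [Complex.mul_re, Complex.ofReal_re, Complex.ofReal_im,
    Complex.exp_ofReal_mul_I_re, Complex.exp_ofReal_mul_I_im, hc]
  ring

lemma bIm_eq : bConst.im = -(Real.sqrt 2 / 2) * Real.sqrt ((1 + 1 / Real.sqrt 3) / 2) := by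
  have hs : Real.sin (5 * Real.pi / 4) = -(Real.sqrt 2 / 2) := by
    have h : (5 * Real.pi / 4) = Real.pi + Real.pi / 4 := by ring
    rw [h]; simp [Real.sin_add, Real.sin_pi_div_four]
  have h1 : (Complex.I * (5 * Real.pi / 4) : ℂ) = ((5 * Real.pi / 4 : ℝ) : ℂ) * Complex.I := by
    push_cast; ring
  unfold bConst
  rw [h1]
  simp only [Complex.mul_im, Complex.ofReal_re, Complex.ofReal_im,
    Complex.exp_ofReal_mul_I_re, Complex.exp_ofReal_mul_I_im, hs]
  ring

lemma bRe_ne : bConst.re ≠ 0 := by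
  rw [bRe_eq]
  have h2 : (0:ℝ) < Real.sqrt 2 := Real.sqrt_pos.2 (by norm_num)
  have hr : (0:ℝ) < Real.sqrt ((1 + 1 / Real.sqrt 3) / 2) := by
    apply Real.sqrt_pos.2
    have h := sqrt3_gt_one
    have : 0 < 1 / Real.sqrt 3 := by positivity
    linarith
  nlinarith

lemma determine (a t : ℝ) (ha : a ≠ 0) (htne : t ≠ 0) (u v : ℂ)
    (hb : bConst.re = t) (hbi : bConst.im = t)
    (k0 : (u * (a : ℂ) * bConst).re = (v * (a : ℂ) * bConst).re)
    (k1 : (u * star bConst * (a : ℂ)).re = (v * star bConst * (a : ℂ)).re) : u = v := by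
  simp only [Complex.mul_re, Complex.mul_im, Complex.ofReal_re, Complex.ofReal_im,
    Complex.star_def, Complex.conj_re, Complex.conj_im, hb, hbi] at k0 k1
  have hta : t * a ≠ 0 := mul_ne_zero htne ha
  have e1 : (u.re - v.re) * (t * a) = 0 := by linear_combination (k0 + k1) / 2
  have e2 : (u.im - v.im) * (t * a) = 0 := by linear_combination (k1 - k0) / 2
  have h1 := (mul_eq_zero.1 e1).resolve_right hta
  have h2 := (mul_eq_zero.1 e2).resolve_right hta
  exact Complex.ext (by linarith) (by linarith)

theorem stmt6 (z₀ z₁ w₀ w₁ : ℂ)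
    (hz₀ : z₀ ≠ 0) (hz₁ : z₁ ≠ 0) (hw₀ : w₀ ≠ 0) (hw₁ : w₁ ≠ 0)
    (hm0 : ‖z₀‖ ^ 2 = ‖w₀‖ ^ 2)
    (hm1 : ‖z₁‖ ^ 2 = ‖w₁‖ ^ 2)
    (h : ∀ k : Fin 4,
      ‖inn2 ![z₁, z₀] (alphaVec k)‖ ^ 2
        = ‖inn2 ![w₁, w₀] (alphaVec k)‖ ^ 2) :
    z₁ * (starRingEnd ℂ) z₀ = w₁ * (starRingEnd ℂ) w₀ := by
  have e0 := h 0
  have e1 := h 1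
  simp only [inn2, alphaVec, Matrix.cons_val_zero, Matrix.cons_val_one, Matrix.head_cons,
    Matrix.cons_val', Matrix.empty_val', Matrix.cons_val_fin_one, Fin.isValue] at e0 e1
  rw [expand_meas, expand_meas] at e0 e1
  rw [hm0, hm1] at e0 e1
  have key0 : (z₁ * star z₀ * star aConst * bConst).re
      = (w₁ * star w₀ * star aConst * bConst).re := by linarith
  have key1 : (w₁ * star w₀ * star bConst * aConst).re
      = (z₁ * star z₀ * star bConst * aConst).re := by linarith
  have hsa : star aConst = ((Real.sqrt ((1 - 1 / Real.sqrt 3) / 2) : ℝ) : ℂ) :=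
    Complex.conj_ofReal _
  have haC : aConst = ((Real.sqrt ((1 - 1 / Real.sqrt 3) / 2) : ℝ) : ℂ) := rfl
  rw [hsa] at key0
  rw [haC] at key1
  refine determine (Real.sqrt ((1 - 1 / Real.sqrt 3) / 2))
    (-(Real.sqrt 2 / 2) * Real.sqrt ((1 + 1 / Real.sqrt 3) / 2))
    (ne_of_gt aRe_pos) (by rw [← bRe_eq]; exact bRe_ne) _ _ bRe_eq bIm_eq key0 key1.symm
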